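/- Let (R, 𝔪) be an Artinian local commutative ring of exponent e (so 𝔪^e = 0) whose residue field κ = R/𝔪 has positive characteristic p and is algebraically closed. Then for every sufficiently large power q = p^N of p the following hold: q·1 = 0 in R; for all a, b ∈ R one has a ≡ b (mod 𝔪) if and only if a^q = b^q; and there exists a function ω : κ → R (the Witt map) such that ω is multiplicative (ω(uv) = ω(u)ω(v) for all u, v ∈ κ), the residue of ω(u) in κ equals u for every u ∈ κ, and the image of ω equals the set W = {a^q : a ∈ R} of Witt vectors of R. -/

import Mathlib

open IsLocalRing

/-- Let `(R, 𝔪)` be an Artinian local ring of exponent `e` whose residue field `κ` is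
algebraically closed of characteristic `p > 0`. Then for every sufficiently large power
`q = p^N`: `q = 0` in `R`; congruence modulo `𝔪` is equivalent to equality of `q`-th powers;
and there is a multiplicative Witt map `ω : κ → R` splitting the residue map, whose image is
the set `W = {a^q : a ∈ R}` of Witt vectors of `R`. -/
theorem stmt_14 (R : Type u) [CommRing R] [IsArtinianRing R] [IsLocalRing R]
    (p e : ℕ) (hp : p.Prime) [CharP (ResidueField R) p]
    [IsAlgClosed (ResidueField R)]
    (he : (maximalIdeal R) ^ e = ⊥) :
    ∃ N₀ : ℕ, ∀ N : ℕ, N₀ ≤ N →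
      (((p ^ N : ℕ) : R) = 0) ∧
      (∀ a b : R, a - b ∈ maximalIdeal R ↔ a ^ (p ^ N) = b ^ (p ^ N)) ∧
      ∃ ω : ResidueField R → R,
        (∀ u v : ResidueField R, ω (u * v) = ω u * ω v) ∧
        (∀ u : ResidueField R, residue R (ω u) = u) ∧
        Set.range ω = { w : R | ∃ a : R, w = a ^ (p ^ N) } := by
  refine ⟨e, fun N hN => ?_⟩
  haveI : Fact p.Prime := ⟨hp⟩
  have hqpos : 0 < p ^ N := pow_pos hp.pos N
  have hmemiff : ∀ a b : R, a - b ∈ maximalIdeal R ↔ residue R a = residue R b := by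
    intro a b
    rw [← sub_eq_zero (a := residue R a), ← map_sub]
    exact (Ideal.Quotient.eq_zero_iff_mem).symm
  have hpmem : ((p : ℕ) : R) ∈ maximalIdeal R := by
    have h0 : residue R ((p : ℕ) : R) = 0 := by
      rw [map_natCast]; exact CharP.cast_eq_zero _ p
    exact Ideal.Quotient.eq_zero_iff_mem.mp h0
  -- one Frobenius step
  have hstep : ∀ (k : ℕ) (a b : R), a - b ∈ maximalIdeal R →
      a - b ∈ (maximalIdeal R) ^ k → a ^ p - b ^ p ∈ (maximalIdeal R) ^ (k + 1) := by
    intro k a b hab1 habk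
    have hres : residue R a = residue R b := (hmemiff a b).mp hab1
    have hS : (∑ i ∈ Finset.range p, a ^ i * b ^ (p - 1 - i)) ∈ maximalIdeal R := by
      rw [← Ideal.Quotient.eq_zero_iff_mem]
      have hmap : (Ideal.Quotient.mk (maximalIdeal R))
          (∑ i ∈ Finset.range p, a ^ i * b ^ (p - 1 - i))
          = ∑ i ∈ Finset.range p, (residue R b) ^ (p - 1) := by
        rw [map_sum]
        refine Finset.sum_congr rfl fun i hi => ?_
        have hi' : i < p := Finset.mem_range.mp hi
        have : (Ideal.Quotient.mk (maximalIdeal R)) (a ^ i * b ^ (p - 1 - i))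
            = (residue R a) ^ i * (residue R b) ^ (p - 1 - i) := by
          rw [map_mul, map_pow, map_pow]; rfl
        rw [this, hres, ← pow_add]
        congr 1
        omega
      rw [hmap, Finset.sum_const, Finset.card_range, nsmul_eq_mul,
        CharP.cast_eq_zero (ResidueField R) p, zero_mul]
      rfl
    have hkey : a ^ p - b ^ p =
        (∑ i ∈ Finset.range p, a ^ i * b ^ (p - 1 - i)) * (a - b) :=
      (geom_sum₂_mul a b p).symm
    rw [hkey, mul_comm, pow_succ]
    exact Ideal.mul_mem_mul habk hS
  have hiter : ∀ (M : ℕ) (a b : R), a - b ∈ maximalIdeal R →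
      a ^ p ^ M - b ^ p ^ M ∈ (maximalIdeal R) ^ (M + 1) := by
    intro M
    induction M with
    | zero => intro a b h; simpa using h
    | succ M ih =>
      intro a b h
      have h1 : a ^ p ^ M - b ^ p ^ M ∈ maximalIdeal R := by
        have hle : (maximalIdeal R) ^ (M + 1) ≤ maximalIdeal R :=
          Ideal.pow_le_self (Nat.succ_ne_zero M)
        exact hle (ih a b h)
      have h2 := hstep (M + 1) (a ^ p ^ M) (b ^ p ^ M) h1 (ih a b h)
      rw [← pow_mul, ← pow_mul, ← pow_succ] at h2
      exact h2
  have hfwd : ∀ a b : R, a - b ∈ maximalIdeal R → a ^ p ^ N = b ^ p ^ N := by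
    intro a b h
    have h1 := hiter N a b h
    have hle : (maximalIdeal R) ^ (N + 1) ≤ (maximalIdeal R) ^ e :=
      Ideal.pow_le_pow_right (by omega)
    rw [he] at hle
    have := Ideal.mem_bot.mp (hle h1)
    exact sub_eq_zero.mp this
  have hfinj : Function.Injective (fun x : ResidueField R => x ^ p ^ N) := by
    intro x y hxy
    have hsub : (x - y) ^ p ^ N = 0 := by
      rw [sub_pow_char_pow]
      rw [show x ^ p ^ N = y ^ p ^ N from hxy, sub_self]
    have := pow_eq_zero_iff hqpos.ne' |>.mp hsub
    exact sub_eq_zero.mp this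
  have hfsurj : Function.Surjective (fun x : ResidueField R => x ^ p ^ N) := fun u =>
    IsAlgClosed.exists_pow_nat_eq u hqpos
  have hressurj : Function.Surjective (residue R) := Ideal.Quotient.mk_surjective
  set s : ResidueField R → ResidueField R := Function.surjInv hfsurj with hsdef
  set L : ResidueField R → R := Function.surjInv hressurj with hLdef
  have hs : ∀ u, (s u) ^ p ^ N = u := fun u => Function.surjInv_eq hfsurj u
  have hL : ∀ x, residue R (L x) = x := fun x => Function.surjInv_eq hressurj x
  refine ⟨?_, ?_, fun u => (L (s u)) ^ p ^ N, ?_, ?_, ?_⟩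
  · rw [Nat.cast_pow]
    have h1 : ((p : ℕ) : R) ^ N ∈ (maximalIdeal R) ^ N := Ideal.pow_mem_pow hpmem N
    have hle : (maximalIdeal R) ^ N ≤ (maximalIdeal R) ^ e := Ideal.pow_le_pow_right hN
    rw [he] at hle
    exact Ideal.mem_bot.mp (hle h1)
  · intro a b
    refine ⟨hfwd a b, fun h => ?_⟩
    have hres : residue R a ^ p ^ N = residue R b ^ p ^ N := by
      rw [← map_pow, ← map_pow, h]
    exact (hmemiff a b).mpr (hfinj hres)
  · intro u v
    have hsuv : s (u * v) = s u * s v := by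
      apply hfinj
      show s (u * v) ^ p ^ N = (s u * s v) ^ p ^ N
      rw [hs, mul_pow, hs, hs]
    rw [← mul_pow]
    apply hfwd
    apply (hmemiff _ _).mpr
    rw [hL, map_mul, hL, hL, hsuv]
  · intro u
    rw [map_pow, hL, hs]
  · ext w
    constructor
    · rintro ⟨u, rfl⟩
      exact ⟨L (s u), rfl⟩
    · rintro ⟨a, rfl⟩
      refine ⟨(residue R a) ^ p ^ N, ?_⟩
      have hsa : s ((residue R a) ^ p ^ N) = residue R a := by
        apply hfinj
        show _ ^ p ^ N = _ ^ p ^ N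
        rw [hs]
      show (L (s ((residue R a) ^ p ^ N))) ^ p ^ N = a ^ p ^ N
      rw [hsa]
      apply hfwd
      exact (hmemiff _ _).mpr (hL _)
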